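/- Let ρ be a pseudometric on a metric space (Y,d), let X ⊆ Y be nonempty and closed, and suppose ρ has property (*): for every sequence (yₙ) in Y and x ∈ X, if ρ(yₙ,x) → 0 and d(yₙ,X) → 0, then d(yₙ,x) → 0. Then for every constant c > 0, the function ρ + c·d* (where d*(y,y') = min(d(y,y'), d(y,X)+d(y',X))) is a metric on Y whose topology is finer than or equal to that of d, i.e., convergence in ρ + c·d* implies convergence in d. -/
import Mathlib


open Filter Topology

def IsPseudometric {Y : Type*} (d : Y → Y → ℝ) : Prop :=
  (∀ x, d x x = 0) ∧ (∀ x y, 0 ≤ d x y) ∧ (∀ x y, d x y = d y x) ∧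
    (∀ x y z, d x z ≤ d x y + d y z)

/-- `d*(y,y') = min(d(y,y'), d(y,X) + d(y',X))`. -/
noncomputable def dStar {Y : Type*} [MetricSpace Y] (X : Set Y) (y y' : Y) : ℝ :=
  min (dist y y') (Metric.infDist y X + Metric.infDist y' X)

lemma dStar_nonneg {Y : Type*} [MetricSpace Y] (X : Set Y) (y y' : Y) :
    0 ≤ dStar X y y' :=
  le_min dist_nonneg (add_nonneg Metric.infDist_nonneg Metric.infDist_nonneg)

lemma dStar_comm {Y : Type*} [MetricSpace Y] (X : Set Y) (y y' : Y) :
    dStar X y y' = dStar X y' y := by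
  unfold dStar; rw [dist_comm, add_comm]

lemma dStar_triangle {Y : Type*} [MetricSpace Y] (X : Set Y) (x y z : Y) :
    dStar X x z ≤ dStar X x y + dStar X y z := by
  have h1 : Metric.infDist x X ≤ Metric.infDist y X + dist x y :=
    Metric.infDist_le_infDist_add_dist
  have h2 : Metric.infDist z X ≤ Metric.infDist y X + dist z y :=
    Metric.infDist_le_infDist_add_dist
  have hy : 0 ≤ Metric.infDist y X := Metric.infDist_nonneg
  have hzy : dist z y = dist y z := dist_comm z y
  unfold dStar
  rcases min_cases (dist x y) (Metric.infDist x X + Metric.infDist y X) with ⟨e1, _⟩ | ⟨e1, _⟩ <;>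
    rcases min_cases (dist y z) (Metric.infDist y X + Metric.infDist z X) with ⟨e2, _⟩ | ⟨e2, _⟩ <;>
    rw [e1, e2]
  · exact le_trans (min_le_left _ _) (dist_triangle x y z)
  · exact le_trans (min_le_right _ _) (by linarith)
  · exact le_trans (min_le_right _ _) (by linarith)
  · exact le_trans (min_le_right _ _) (by linarith)

theorem rho_add_dStar_dominating_metric {Y : Type*} [MetricSpace Y]
    (X : Set Y) (hne : X.Nonempty) (hcl : IsClosed X)
    (ρ : Y → Y → ℝ) (hρ : IsPseudometric ρ)
    -- property (*)
    (hstar : ∀ (y : ℕ → Y) (x : Y), x ∈ X →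
      Tendsto (fun n => ρ (y n) x) atTop (𝓝 0) →
      Tendsto (fun n => Metric.infDist (y n) X) atTop (𝓝 0) →
      Tendsto (fun n => dist (y n) x) atTop (𝓝 0))
    (c : ℝ) (hc : 0 < c) :
    -- `ρ + c·d*` is a metric
    IsPseudometric (fun y y' => ρ y y' + c * dStar X y y') ∧
    (∀ y y' : Y, ρ y y' + c * dStar X y y' = 0 → y = y') ∧
    -- which dominates `d`: convergence in `ρ + c·d*` implies convergence in `d`
    (∀ (y : ℕ → Y) (x : Y),
      Tendsto (fun n => ρ (y n) x + c * dStar X (y n) x) atTop (𝓝 0) →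
      Tendsto (fun n => dist (y n) x) atTop (𝓝 0)) := by
  obtain ⟨hself, hnonneg, hsymm, htri⟩ := hρ
  -- the domination statement, proved first
  have key : ∀ (y : ℕ → Y) (x : Y),
      Tendsto (fun n => ρ (y n) x + c * dStar X (y n) x) atTop (𝓝 0) →
      Tendsto (fun n => dist (y n) x) atTop (𝓝 0) := by
    intro y x h
    have hρ0 : Tendsto (fun n => ρ (y n) x) atTop (𝓝 0) :=
      squeeze_zero (fun n => hnonneg _ _)
        (fun n => le_add_of_nonneg_right (mul_nonneg hc.le (dStar_nonneg X _ _))) h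
    have hcd0 : Tendsto (fun n => c * dStar X (y n) x) atTop (𝓝 0) :=
      squeeze_zero (fun n => mul_nonneg hc.le (dStar_nonneg X _ _))
        (fun n => le_add_of_nonneg_left (hnonneg _ _)) h
    have hd0 : Tendsto (fun n => dStar X (y n) x) atTop (𝓝 0) := by
      have h2 := hcd0.const_mul c⁻¹
      simpa [← mul_assoc, inv_mul_cancel₀ hc.ne'] using h2
    by_cases hx : x ∈ X
    · have hfx : Metric.infDist x X = 0 := Metric.infDist_zero_of_mem hx
      have heq : ∀ n, dStar X (y n) x = Metric.infDist (y n) X := by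
        intro n
        unfold dStar
        rw [hfx, add_zero, min_eq_right (Metric.infDist_le_dist_of_mem hx)]
      simp only [heq] at hd0
      exact hstar y x hx hρ0 hd0
    · have hfx : 0 < Metric.infDist x X := by
        rcases lt_or_eq_of_le (Metric.infDist_nonneg (x := x) (s := X)) with h' | h'
        · exact h'
        · exact absurd ((hcl.mem_iff_infDist_zero hne).mpr h'.symm) hx
      have hev : ∀ᶠ n in atTop, dStar X (y n) x = dist (y n) x := by
        filter_upwards [hd0.eventually (gt_mem_nhds hfx)] with n hn
        have hab : dist (y n) x ≤ Metric.infDist (y n) X + Metric.infDist x X := by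
          by_contra h'
          push_neg at h'
          rw [dStar, min_eq_right h'.le] at hn
          have := Metric.infDist_nonneg (x := y n) (s := X)
          linarith
        rw [dStar, min_eq_left hab]
      exact hd0.congr' hev
  refine ⟨⟨?_, ?_, ?_, ?_⟩, ?_, key⟩
  · intro x
    have : dStar X x x = 0 := by
      unfold dStar
      rw [dist_self]
      exact min_eq_left (add_nonneg Metric.infDist_nonneg Metric.infDist_nonneg)
    simp [hself, this]
  · intro x y
    exact add_nonneg (hnonneg _ _) (mul_nonneg hc.le (dStar_nonneg X _ _))
  · intro x y
    show ρ x y + c * dStar X x y = ρ y x + c * dStar X y x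
    rw [hsymm x y, dStar_comm]
  · intro x y z
    show ρ x z + c * dStar X x z ≤ (ρ x y + c * dStar X x y) + (ρ y z + c * dStar X y z)
    have h1 := mul_le_mul_of_nonneg_left (dStar_triangle X x y z) hc.le
    have h2 := htri x y z
    linarith
  · intro y y' h0
    have hρn := hnonneg y y'
    have hdn := dStar_nonneg X y y'
    have hρ0 : ρ y y' = 0 := by nlinarith
    have hds : dStar X y y' = 0 := by nlinarith
    rcases min_cases (dist y y') (Metric.infDist y X + Metric.infDist y' X) with
      ⟨e, _⟩ | ⟨e, _⟩
    · rw [dStar, e] at hds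
      exact dist_eq_zero.mp hds
    · rw [dStar, e] at hds
      have h1 : Metric.infDist y X = 0 := by
        have := Metric.infDist_nonneg (x := y) (s := X)
        have := Metric.infDist_nonneg (x := y') (s := X)
        linarith
      have hy' : y' ∈ X := by
        have h2 : Metric.infDist y' X = 0 := by
          have := Metric.infDist_nonneg (x := y) (s := X)
          linarith
        exact (hcl.mem_iff_infDist_zero hne).mpr h2
      have htd : Tendsto (fun _ : ℕ => dist y y') atTop (𝓝 0) :=
        hstar (fun _ => y) y' hy' (by simp [hρ0])
          (by simp [h1])
      have : dist y y' = 0 := tendsto_nhds_unique tendsto_const_nhds htd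
      exact dist_eq_zero.mp this
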